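/- With B and the fast subdivision (D_n)_{n≥0} of [2/3,1] as defined, every connected component of D_n with nonempty interior is a triadic interval of the form [m/3^k, (m+1)/3^k] for integers m and k ≥ 1. -/

import Mathlib

open Set MeasureTheory

noncomputable def cantorK : Set ℝ :=
  {x | ∃ α : ℕ → ℝ, (∀ k, α k = 0 ∨ α k = 2) ∧ x = ∑' k : ℕ, α k / 3 ^ (k + 1)}

def Pset (E F : Set ℝ) : Set ℝ := Set.image2 (· * ·) E F

/-- Orientation-preserving affine bijection from `[0,1]` onto the interval `I`. -/
noncomputable def affI (I : Set ℝ) (x : ℝ) : ℝ := sInf I + (sSup I - sInf I) * x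

/-- The family of connected components of `S` with nonempty interior. -/
def compsE (S : Set ℝ) : Set (Set ℝ) :=
  {I | (∃ x ∈ S, I = connectedComponentIn S x) ∧ (interior I).Nonempty}

/-- The union `B` of gaps removed from `[0,1]` in the fast subdivision. -/
noncomputable def gapB : Set ℝ :=
  (⋃ k : ℕ, Ioo ((1:ℝ)/3^(k+2)) (2/3^(k+2))) ∪ Ioo (1/3) (2/3) ∪
  ⋃ k : ℕ, Ioo (((3:ℝ)^(k+2) - 2)/3^(k+2)) ((3^(k+2) - 1)/3^(k+2))

/-- The fast subdivision of `[2/3, 1]`. -/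
noncomputable def fastD : ℕ → Set ℝ
  | 0 => Icc (2/3) 1
  | n + 1 => fastD n \ ⋃ I ∈ compsE (fastD n), affI I '' gapB

namespace Aux

lemma pow3_pos (k : ℕ) : (0:ℝ) < 3 ^ k := by positivity

lemma pow3_mono {m j : ℕ} (h : m ≤ j) : (3:ℝ) ^ m ≤ 3 ^ j :=
  pow_le_pow_right₀ (by norm_num) h

lemma nine_le {j : ℕ} (h : 2 ≤ j) : (9:ℝ) ≤ 3 ^ j := by
  calc (9:ℝ) = 3 ^ 2 := by norm_num
  _ ≤ 3 ^ j := pow3_mono h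

lemma sub_div3 (n : ℕ) (c : ℝ) : ((3:ℝ)^n - c)/3^n = 1 - c/3^n := by
  rw [sub_div, div_self (by positivity)]

lemma gap_left (m : ℕ) : Ioo ((1:ℝ)/3^(m+1)) (2/3^(m+1)) ⊆ gapB := by
  cases m with
  | zero => intro x hx; left; right; norm_num at hx ⊢; exact hx
  | succ k => intro x hx; left; left; exact mem_iUnion.2 ⟨k, hx⟩

lemma gap_right (m : ℕ) : Ioo (1-(2:ℝ)/3^(m+1)) (1-1/3^(m+1)) ⊆ gapB := by
  cases m with
  | zero => intro x hx; left; right; norm_num at hx ⊢; exact hx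
  | succ k =>
      intro x hx; right
      refine mem_iUnion.2 ⟨k, ?_⟩
      rw [sub_div3 (k+2) 2, sub_div3 (k+2) 1]
      exact hx

lemma mem_gapB_iff {x : ℝ} : x ∈ gapB ↔ ∃ m : ℕ,
    x ∈ Ioo ((1:ℝ)/3^(m+1)) (2/3^(m+1)) ∨ x ∈ Ioo (1-(2:ℝ)/3^(m+1)) (1-1/3^(m+1)) := by
  constructor
  · rintro ((h | h) | h)
    · obtain ⟨k, hk⟩ := mem_iUnion.1 h
      exact ⟨k+1, Or.inl hk⟩
    · exact ⟨0, Or.inl (by norm_num at h ⊢; exact h)⟩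
    · obtain ⟨k, hk⟩ := mem_iUnion.1 h
      rw [sub_div3 (k+2) 2, sub_div3 (k+2) 1] at hk
      exact ⟨k+1, Or.inr hk⟩
  · rintro ⟨m, h | h⟩
    · exact gap_left m h
    · exact gap_right m h

lemma gapB_subset_unit : gapB ⊆ Icc (0:ℝ) 1 := by
  intro x hx
  obtain ⟨m, h | h⟩ := mem_gapB_iff.1 hx
  · obtain ⟨h1, h2⟩ := h
    have p := pow3_pos (m+1)
    have p3 : (3:ℝ) ≤ 3^(m+1) := by
      calc (3:ℝ) = 3^1 := by norm_num
      _ ≤ 3^(m+1) := pow3_mono (by omega)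
    constructor
    · have : (0:ℝ) < 1/3^(m+1) := by positivity
      linarith
    · have : (2:ℝ)/3^(m+1) ≤ 2/3 := by
        rw [div_le_div_iff₀ p (by norm_num)]; linarith
      linarith
  · obtain ⟨h1, h2⟩ := h
    have p := pow3_pos (m+1)
    have p3 : (3:ℝ) ≤ 3^(m+1) := by
      calc (3:ℝ) = 3^1 := by norm_num
      _ ≤ 3^(m+1) := pow3_mono (by omega)
    constructor
    · have : (2:ℝ)/3^(m+1) ≤ 2/3 := by
        rw [div_le_div_iff₀ p (by norm_num)]; linarith
      linarith
    · have : (0:ℝ) < 1/3^(m+1) := by positivity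
      linarith


/-- The complement of the gaps in `[0,1]`. -/
noncomputable def K0 : Set ℝ := Icc (0:ℝ) 1 \ gapB

lemma Tl_subset_K0 {j : ℕ} (hj : 2 ≤ j) : Icc ((2:ℝ)/3^j) (3/3^j) ⊆ K0 := by
  intro x ⟨hx1, hx2⟩
  have p := pow3_pos j
  have h9 := nine_le hj
  constructor
  · constructor
    · have : (0:ℝ) ≤ 2/3^j := by positivity
      linarith
    · have : (3:ℝ)/3^j ≤ 1/3 := by rw [div_le_div_iff₀ p (by norm_num)]; linarith
      linarith
  · intro hg
    obtain ⟨m, h | h⟩ := mem_gapB_iff.1 hg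
    · obtain ⟨h1, h2⟩ := h
      rcases le_or_gt j (m+1) with hc | hc
      · have : (2:ℝ)/3^(m+1) ≤ 2/3^j := by
          apply div_le_div_of_nonneg_left (by norm_num) p (pow3_mono hc)
        linarith
      · -- m+2 ≤ j : x ≤ 3/3^j ≤ 3/3^(m+2) = 1/3^(m+1)
        have hle : (3:ℝ)^(m+2) ≤ 3^j := pow3_mono hc
        have e : (3:ℝ)/3^(m+2) = 1/3^(m+1) := by
          rw [pow_succ]; field_simp
        have : (3:ℝ)/3^j ≤ 3/3^(m+2) :=
          div_le_div_of_nonneg_left (by norm_num) (pow3_pos _) hle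
        rw [e] at this
        linarith
    · obtain ⟨h1, h2⟩ := h
      have p1 := pow3_pos (m+1)
      have p3 : (3:ℝ) ≤ 3^(m+1) := by
        calc (3:ℝ) = 3^1 := by norm_num
        _ ≤ 3^(m+1) := pow3_mono (by omega)
      have hA : (3:ℝ)/3^j ≤ 1/3 := by rw [div_le_div_iff₀ p (by norm_num)]; linarith
      have hB : (2:ℝ)/3^(m+1) ≤ 2/3 := by rw [div_le_div_iff₀ p1 (by norm_num)]; linarith
      linarith

lemma Tr_subset_K0 {j : ℕ} (hj : 2 ≤ j) : Icc (1-(3:ℝ)/3^j) (1-2/3^j) ⊆ K0 := by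
  intro x ⟨hx1, hx2⟩
  have p := pow3_pos j
  have h9 := nine_le hj
  have hA : (3:ℝ)/3^j ≤ 1/3 := by rw [div_le_div_iff₀ p (by norm_num)]; linarith
  constructor
  · constructor
    · linarith
    · have : (0:ℝ) < 2/3^j := by positivity
      linarith
  · intro hg
    obtain ⟨m, h | h⟩ := mem_gapB_iff.1 hg
    · obtain ⟨h1, h2⟩ := h
      have p1 := pow3_pos (m+1)
      have p3 : (3:ℝ) ≤ 3^(m+1) := by
        calc (3:ℝ) = 3^1 := by norm_num
        _ ≤ 3^(m+1) := pow3_mono (by omega)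
      have hB : (2:ℝ)/3^(m+1) ≤ 2/3 := by rw [div_le_div_iff₀ p1 (by norm_num)]; linarith
      linarith
    · obtain ⟨h1, h2⟩ := h
      rcases le_or_gt j (m+1) with hc | hc
      · have : (2:ℝ)/3^(m+1) ≤ 2/3^j :=
          div_le_div_of_nonneg_left (by norm_num) p (pow3_mono hc)
        linarith
      · have hle : (3:ℝ)^(m+2) ≤ 3^j := pow3_mono hc
        have e : (3:ℝ)/3^(m+2) = 1/3^(m+1) := by rw [pow_succ]; field_simp; try ring
        have : (3:ℝ)/3^j ≤ 3/3^(m+2) :=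
          div_le_div_of_nonneg_left (by norm_num) (pow3_pos _) hle
        rw [e] at this
        linarith

/-- trap lemma: an ordConnected set avoiding the gaps, meeting `[a,b]`,
with gaps on both sides, lies in `[a,b]`. -/
lemma trap {S : Set ℝ} (hS : S.OrdConnected) (hdisj : ∀ z ∈ S, z ∉ gapB)
    {y a b a' b' : ℝ} (hy : y ∈ S) (hya : a ≤ y) (hyb : y ≤ b)
    (ha' : a' < a) (hb' : b < b') (hga : Ioo a' a ⊆ gapB) (hgb : Ioo b b' ⊆ gapB) :
    S ⊆ Icc a b := by
  intro q hq
  constructor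
  · by_contra h
    push_neg at h
    set z := (max q a' + a) / 2 with hz
    have h1 : max q a' < a := max_lt h ha'
    have hza : z < a := by simp only [hz]; linarith
    have hza' : a' < z := by
      have := le_max_right q a'
      simp only [hz]; linarith
    have hzq : q < z := by
      have := le_max_left q a'
      simp only [hz]; linarith
    have hzS : z ∈ S := hS.out hq hy ⟨le_of_lt hzq, by linarith⟩
    exact hdisj z hzS (hga ⟨hza', hza⟩)
  · by_contra h
    push_neg at h
    set z := (b + min q b') / 2 with hz
    have h1 : b < min q b' := lt_min h hb'
    have hzb : b < z := by simp only [hz]; linarith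
    have hzb' : z < b' := by
      have := min_le_right q b'
      simp only [hz]; linarith
    have hzq : z < q := by
      have := min_le_left q b'
      simp only [hz]; linarith
    have hzS : z ∈ S := hS.out hy hq ⟨by linarith, le_of_lt hzq⟩
    exact hdisj z hzS (hgb ⟨hzb, hzb'⟩)

/-- ladder: locate a small positive non-gap point in a triadic band. -/
lemma ladder {z : ℝ} (h0 : 0 < z) (h3 : z ≤ 1/3)
    (hgap : ∀ m : ℕ, z ∉ Ioo ((1:ℝ)/3^(m+1)) (2/3^(m+1))) :
    ∃ j, 2 ≤ j ∧ z ∈ Icc ((2:ℝ)/3^j) (3/3^j) := by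
  have hex : ∃ n : ℕ, (1:ℝ)/3^n < z := by
    obtain ⟨n, hn⟩ := pow_unbounded_of_one_lt (1/z) (show (1:ℝ) < 3 by norm_num)
    exact ⟨n, by rw [div_lt_iff₀ (pow3_pos n)]; rw [div_lt_iff₀ h0] at hn; linarith⟩
  classical
  have hspec : (1:ℝ)/3^(Nat.find hex) < z := Nat.find_spec hex
  have hmin : ∀ m < Nat.find hex, ¬ ((1:ℝ)/3^m < z) :=
    fun m hm => Nat.find_min hex hm
  have hN2 : 2 ≤ Nat.find hex := by
    by_contra hc
    push_neg at hc
    have : (1:ℝ)/3 ≤ 1/3^(Nat.find hex) := by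
      apply div_le_div_of_nonneg_left (by norm_num) (pow3_pos _)
      calc (3:ℝ)^(Nat.find hex) ≤ 3^1 := pow3_mono (by omega)
      _ = 3 := by norm_num
    linarith
  obtain ⟨M, hM⟩ : ∃ M, Nat.find hex = M + 2 := ⟨Nat.find hex - 2, by omega⟩
  rw [hM] at hspec hmin
  refine ⟨M + 2, by omega, ?_, ?_⟩
  · -- z ≥ 2/3^(M+2) : not in gap (m = M+1) and z > 1/3^(M+2)
    have := hgap (M+1)
    simp only [mem_Ioo, not_and, not_lt] at this
    exact this hspec
  · -- z ≤ 1/3^(M+1) = 3/3^(M+2)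
    have h1 : ¬ ((1:ℝ)/3^(M+1) < z) := hmin (M+1) (by omega)
    push_neg at h1
    have e : (3:ℝ)/3^(M+2) = 1/3^(M+1) := by rw [pow_succ]; field_simp; try ring
    linarith [e ▸ h1]

lemma mem_decomp {y : ℝ} (hy : y ∈ K0) (h0 : y ≠ 0) (h1 : y ≠ 1) :
    ∃ j, 2 ≤ j ∧ (y ∈ Icc ((2:ℝ)/3^j) (3/3^j) ∨ y ∈ Icc (1-(3:ℝ)/3^j) (1-2/3^j)) := by
  obtain ⟨⟨hy0, hy1⟩, hyg⟩ := hy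
  have hy0' : 0 < y := lt_of_le_of_ne hy0 (Ne.symm h0)
  have hy1' : y < 1 := lt_of_le_of_ne hy1 h1
  rcases le_or_gt y (1/3) with hc | hc
  · obtain ⟨j, hj, hmem⟩ := ladder hy0' hc (fun m hm => hyg (gap_left m hm))
    exact ⟨j, hj, Or.inl hmem⟩
  · rcases lt_or_ge y (2/3) with hc2 | hc2
    · exact absurd (gap_left 0 (by norm_num; exact ⟨hc, hc2⟩)) (fun h => hyg h)
    · have hz0 : 0 < 1 - y := by linarith
      have hz3 : 1 - y ≤ 1/3 := by linarith
      have hzg : ∀ m : ℕ, 1 - y ∉ Ioo ((1:ℝ)/3^(m+1)) (2/3^(m+1)) := by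
        intro m ⟨hm1, hm2⟩
        exact hyg (gap_right m ⟨by linarith, by linarith⟩)
      obtain ⟨j, hj, hm1, hm2⟩ := ladder hz0 hz3 hzg
      exact ⟨j, hj, Or.inr ⟨by linarith, by linarith⟩⟩

/-- Components of `K0` with nonempty interior are triadic intervals. -/
lemma K0_comp {y : ℝ} (hy : y ∈ K0)
    (hint : (interior (connectedComponentIn K0 y)).Nonempty) :
    ∃ (c : ℤ) (j : ℕ), 2 ≤ j ∧
      connectedComponentIn K0 y = Icc ((c:ℝ)/3^j) ((c+1)/3^j) := by
  classical
  set C := connectedComponentIn K0 y with hC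
  -- pick a point of the interior different from 0 and 1
  have hIopen : IsOpen (interior C) := isOpen_interior
  obtain ⟨u, hu⟩ := hint
  obtain ⟨r, hr, hball⟩ := Metric.isOpen_iff.1 hIopen u hu
  have hIoo : Ioo (u - r) (u + r) ⊆ interior C := by
    intro v hv
    apply hball
    rw [Metric.mem_ball, Real.dist_eq, abs_lt]
    constructor <;> [linarith [hv.1]; linarith [hv.2]]
  have hinf : (interior C).Infinite :=
    (Set.Ioo_infinite (by linarith : u - r < u + r)).mono hIoo
  obtain ⟨w, hwI, hw01⟩ : ∃ w ∈ interior C, w ∉ ({0, 1} : Set ℝ) := by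
    have := (hinf.diff ((Set.finite_singleton (1:ℝ)).insert 0)).nonempty
    obtain ⟨w, hw⟩ := this
    exact ⟨w, hw.1, hw.2⟩
  simp only [mem_insert_iff, mem_singleton_iff, not_or] at hw01
  have hwC : w ∈ C := interior_subset hwI
  have hwK : w ∈ K0 := connectedComponentIn_subset _ _ hwC
  have hCw : C = connectedComponentIn K0 w := connectedComponentIn_eq hwC
  have hord : C.OrdConnected := isPreconnected_connectedComponentIn.ordConnected
  have hdisj : ∀ z ∈ C, z ∉ gapB := fun z hz => (connectedComponentIn_subset _ _ hz).2
  obtain ⟨j, hj, hmem | hmem⟩ := mem_decomp hwK hw01.1 hw01.2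
  all_goals obtain ⟨J, rfl⟩ : ∃ J, j = J + 2 := ⟨j - 2, by omega⟩
  · -- left interval
    refine ⟨2, J + 2, by omega, ?_⟩
    have hsub : C ⊆ Icc ((2:ℝ)/3^(J+2)) (3/3^(J+2)) := by
      have e1 : (3:ℝ)/3^(J+2) = 1/3^(J+1) := by rw [pow_succ]; field_simp; try ring
      have e2 : (6:ℝ)/3^(J+2) = 2/3^(J+1) := by rw [pow_succ]; field_simp; try ring
      refine trap hord hdisj hwC hmem.1 hmem.2
        (a' := (1:ℝ)/3^(J+2)) (b' := (6:ℝ)/3^(J+2)) ?_ ?_ ?_ ?_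
      · have p := pow3_pos (J+2)
        rw [div_lt_div_iff₀ p p]; nlinarith
      · have p := pow3_pos (J+2)
        rw [div_lt_div_iff₀ p p]; nlinarith
      · exact gap_left (J+1)
      · intro v hv
        refine gap_left J ⟨?_, ?_⟩
        · rw [← e1]; exact hv.1
        · rw [← e2]; exact hv.2
    have hsup : Icc ((2:ℝ)/3^(J+2)) (3/3^(J+2)) ⊆ C := by
      rw [hCw]
      exact isPreconnected_Icc.subset_connectedComponentIn hmem (Tl_subset_K0 (by omega))
    have : C = Icc ((2:ℝ)/3^(J+2)) (3/3^(J+2)) := le_antisymm hsub hsup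
    rw [this]; norm_num
  · -- right interval
    refine ⟨3^(J+2) - 3, J + 2, by omega, ?_⟩
    have e1 : (3:ℝ)/3^(J+2) = 1/3^(J+1) := by rw [pow_succ]; field_simp; try ring
    have e2 : (6:ℝ)/3^(J+2) = 2/3^(J+1) := by rw [pow_succ]; field_simp; try ring
    have hsub : C ⊆ Icc (1-(3:ℝ)/3^(J+2)) (1-2/3^(J+2)) := by
      refine trap hord hdisj hwC hmem.1 hmem.2
        (a' := 1-(6:ℝ)/3^(J+2)) (b' := 1-(1:ℝ)/3^(J+2)) ?_ ?_ ?_ ?_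
      · have p := pow3_pos (J+2)
        have : (3:ℝ)/3^(J+2) < 6/3^(J+2) := by rw [div_lt_div_iff₀ p p]; nlinarith
        linarith
      · have p := pow3_pos (J+2)
        have : (1:ℝ)/3^(J+2) < 2/3^(J+2) := by rw [div_lt_div_iff₀ p p]; nlinarith
        linarith
      · intro v hv
        refine gap_right J ⟨?_, ?_⟩
        · rw [← e2]; exact hv.1
        · rw [← e1]; exact hv.2
      · exact gap_right (J+1)
    have hsup : Icc (1-(3:ℝ)/3^(J+2)) (1-2/3^(J+2)) ⊆ C := by
      rw [hCw]
      exact isPreconnected_Icc.subset_connectedComponentIn hmem (Tr_subset_K0 (by omega))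
    have : C = Icc (1-(3:ℝ)/3^(J+2)) (1-2/3^(J+2)) := le_antisymm hsub hsup
    rw [this]
    have p := pow3_pos (J+2)
    have hne : ((3:ℝ)^(J+2)) ≠ 0 := ne_of_gt p
    congr 1 <;> push_cast <;> field_simp <;> ring


lemma affI_Icc {c d : ℝ} (h : c ≤ d) : affI (Icc c d) = fun y => (d - c) * y + c := by
  funext y
  simp only [affI, csInf_Icc h, csSup_Icc h]
  ring

lemma affI_image_subset {c d : ℝ} (h : c < d) : affI (Icc c d) '' gapB ⊆ Icc c d := by
  rw [affI_Icc h.le]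
  intro z hz
  have : z ∈ ((d - c) * · + c) '' Icc (0:ℝ) 1 :=
    image_mono gapB_subset_unit hz
  rw [image_affine_Icc' (by linarith) c 0 1] at this
  simpa using this

end Aux

theorem stmt8 (n : ℕ) (I : Set ℝ) (hI : I ∈ compsE (fastD n)) :
    ∃ (m : ℤ) (k : ℕ), 1 ≤ k ∧ I = Icc ((m : ℝ)/3^k) ((m + 1 : ℝ)/3^k) := by
  induction n generalizing I with
  | zero =>
    obtain ⟨⟨x, hx, rfl⟩, hint⟩ := hI
    refine ⟨2, 1, le_refl 1, ?_⟩
    have h0 : fastD 0 = Icc (2/3 : ℝ) 1 := rfl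
    rw [h0] at hx ⊢
    rw [isPreconnected_Icc.connectedComponentIn hx]
    norm_num
  | succ n ih =>
    obtain ⟨⟨x, hx, rfl⟩, hint⟩ := hI
    have hfd : fastD (n+1) = fastD n \ ⋃ I' ∈ compsE (fastD n), affI I' '' gapB := rfl
    have hxS : x ∈ fastD n := by rw [hfd] at hx; exact hx.1
    have hxU : x ∉ ⋃ I' ∈ compsE (fastD n), affI I' '' gapB := by
      rw [hfd] at hx; exact hx.2
    have hII0 : connectedComponentIn (fastD (n+1)) x ⊆ connectedComponentIn (fastD n) x := by
      apply isPreconnected_connectedComponentIn.subset_connectedComponentIn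
        (mem_connectedComponentIn hx)
      intro z hz
      have := connectedComponentIn_subset (fastD (n+1)) x hz
      rw [hfd] at this; exact this.1
    have hint0 : (interior (connectedComponentIn (fastD n) x)).Nonempty :=
      hint.mono (interior_mono hII0)
    have hI0c : connectedComponentIn (fastD n) x ∈ compsE (fastD n) := ⟨⟨x, hxS, rfl⟩, hint0⟩
    obtain ⟨m, k, hk, hI0Icc⟩ := ih _ hI0c
    set a : ℝ := (m:ℝ)/3^k with ha
    set b : ℝ := ((m:ℝ)+1)/3^k with hb
    have hI0Icc' : connectedComponentIn (fastD n) x = Icc a b := hI0Icc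
    have hab : a < b := by
      have h1 := hint0
      rw [hI0Icc', interior_Icc] at h1
      exact nonempty_Ioo.1 h1
    have hd : (0:ℝ) < b - a := by linarith
    set f := affineHomeomorph (b-a) a hd.ne' with hf
    have hfapp : ∀ y : ℝ, f y = (b-a)*y + a := fun y => rfl
    have hfI : affI (connectedComponentIn (fastD n) x) = ⇑f := by
      rw [hI0Icc', Aux.affI_Icc hab.le]
      funext y
      rw [hfapp]
    have hfIcc : ⇑f '' Icc (0:ℝ) 1 = connectedComponentIn (fastD n) x := by
      have himg := affineHomeomorph_image_Icc (b-a) a 0 1 hd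
      rw [← hf] at himg
      rw [himg, hI0Icc']
      norm_num
    have hsubU : ⇑f '' gapB ⊆ ⋃ I' ∈ compsE (fastD n), affI I' '' gapB := by
      intro z hz
      exact mem_biUnion hI0c (hfI ▸ hz)
    have hdiff_sub : connectedComponentIn (fastD n) x \ ⇑f '' gapB ⊆ fastD (n+1) := by
      intro z hz
      rw [hfd]
      refine ⟨connectedComponentIn_subset _ _ hz.1, ?_⟩
      intro hzU
      simp only [mem_iUnion, exists_prop] at hzU
      obtain ⟨I', hI'mem, hz'⟩ := hzU
      obtain ⟨m', k', _, hIcc'⟩ := ih I' hI'mem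
      have hab' : (m':ℝ)/3^k' < ((m':ℝ)+1)/3^k' := by
        have h1 := hI'mem.2
        rw [hIcc', interior_Icc] at h1
        exact nonempty_Ioo.1 h1
      have hz'mem : z ∈ I' := by
        rw [hIcc'] at hz' ⊢
        have := Aux.affI_image_subset (c := (m':ℝ)/3^k') (d := ((m':ℝ)+1)/3^k') hab'
        exact this hz'
      obtain ⟨u, hu, hIu⟩ := hI'mem.1
      have heq : I' = connectedComponentIn (fastD n) x := by
        rw [hIu] at hz'mem ⊢
        rw [connectedComponentIn_eq hz'mem,
          connectedComponentIn_eq (show z ∈ connectedComponentIn (fastD n) x from hz.1)]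
      rw [heq, hfI] at hz'
      exact hz.2 hz'
    have hxmem : x ∈ connectedComponentIn (fastD n) x \ ⇑f '' gapB :=
      ⟨mem_connectedComponentIn hxS, fun hc => hxU (hsubU hc)⟩
    have hIeq : connectedComponentIn (fastD (n+1)) x
        = connectedComponentIn (connectedComponentIn (fastD n) x \ ⇑f '' gapB) x := by
      apply le_antisymm
      · apply isPreconnected_connectedComponentIn.subset_connectedComponentIn
          (mem_connectedComponentIn hx)
        intro z hz
        refine ⟨hII0 hz, ?_⟩
        intro hc
        have := connectedComponentIn_subset (fastD (n+1)) x hz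
        rw [hfd] at this
        exact this.2 (hsubU hc)
      · exact connectedComponentIn_mono x hdiff_sub
    have hK : connectedComponentIn (fastD n) x \ ⇑f '' gapB = ⇑f '' Aux.K0 := by
      rw [Aux.K0, image_diff f.injective, hfIcc]
    obtain ⟨y, hyK, hyx⟩ : ∃ y ∈ Aux.K0, f y = x := by
      have : x ∈ ⇑f '' Aux.K0 := hK ▸ hxmem
      exact this
    have hIimg : connectedComponentIn (fastD (n+1)) x = ⇑f '' connectedComponentIn Aux.K0 y := by
      rw [hIeq, hK, ← hyx]
      exact (f.image_connectedComponentIn hyK).symm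
    have hintC : (interior (connectedComponentIn Aux.K0 y)).Nonempty := by
      rw [hIimg, ← f.image_interior] at hint
      exact image_nonempty.1 hint
    obtain ⟨c, j, hj, hcomp⟩ := Aux.K0_comp hyK hintC
    refine ⟨m * 3^j + c, k + j, by omega, ?_⟩
    rw [hIimg, hcomp]
    have himg := affineHomeomorph_image_Icc (b-a) a ((c:ℝ)/3^j) (((c:ℝ)+1)/3^j) hd
    rw [← hf] at himg
    rw [himg]
    have hba : b - a = 1/3^k := by
      rw [hb, ha, div_sub_div_same]
      ring_nf
    have hpk : ((3:ℝ)^k) ≠ 0 := by positivity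
    have hpj : ((3:ℝ)^j) ≠ 0 := by positivity
    have e1 : (1/3^k) * ((c:ℝ)/3^j) + a = ((m * 3^j + c : ℤ) : ℝ)/3^(k+j) := by
      rw [ha]; push_cast [pow_add]; field_simp; ring
    have e2 : (1/3^k) * (((c:ℝ)+1)/3^j) + a = (((m * 3^j + c : ℤ) : ℝ)+1)/3^(k+j) := by
      rw [ha]; push_cast [pow_add]; field_simp; ring
    rw [hba, e1, e2]
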